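/- arXiv:0710.1972 — 3 statements merged into one kernel-verified Lean document; each statement's English description precedes it below -/
import Mathlib

section
/- For every n ≥ 3, every q ∈ ℂ with q ≠ 0, and every 1 ≤ i < n − 1, the operators on V_{n,q} satisfy the braid relation T_i T_{i+1} T_i = T_{i+1} T_i T_{i+1} in End_ℂ(V_{n,q}). -/
open Equiv

/-- The set of involutions in `Sₙ` (elements `w` with `w² = id`). -/
abbrev SymInv (n : ℕ) : Type := {w : Equiv.Perm (Fin n) // w * w = 1}

/-- `V_{n,q}`: the complex vector space with basis `{I_w : w an involution in Sₙ}`. -/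
abbrev Vn (n : ℕ) : Type := SymInv n →₀ ℂ

/-- Conjugation of an involution by a permutation: `π w π⁻¹`. -/
def conjInv (n : ℕ) (π : Equiv.Perm (Fin n)) (w : SymInv n) : SymInv n :=
  ⟨π * w.1 * π⁻¹, by
    have h : π * w.1 * π⁻¹ * (π * w.1 * π⁻¹) = π * (w.1 * w.1) * π⁻¹ := by group
    rw [h, w.2, mul_one, mul_inv_cancel]⟩

/-- The operator `T_i` on `V_{n,q}`.  Here indices are 0-based: the parameter `i`
(with `i + 1 < n`) corresponds to the pair of points `i, i+1` of `{0, …, n−1}`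
(that is, to the 1-based index `i+1` of the paper), and `s_i` is the transposition
swapping them.  On a basis vector `I_w` it acts by:
`q I_w` if `i, i+1 ∉ supp(w)`; `−I_w` if `i, i+1 ∈ supp(w)`;
`I_{s_i w s_i}` if `i ∈ supp(w)`, `i+1 ∉ supp(w)`;
`q I_{s_i w s_i} + (q−1) I_w` if `i ∉ supp(w)`, `i+1 ∈ supp(w)`. -/
noncomputable def TOp (n : ℕ) (q : ℂ) (i : ℕ) (hi : i + 1 < n) : Vn n →ₗ[ℂ] Vn n :=
  Finsupp.lift (Vn n) ℂ (SymInv n) (fun w =>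
    letI a : Fin n := ⟨i, Nat.lt_of_succ_lt hi⟩
    letI b : Fin n := ⟨i + 1, hi⟩
    letI s : Equiv.Perm (Fin n) := Equiv.swap a b
    if w.1 a = a then
      (if w.1 b = b then q • Finsupp.single w (1 : ℂ)
       else q • Finsupp.single (conjInv n s w) (1 : ℂ) + (q - 1) • Finsupp.single w (1 : ℂ))
    else
      (if w.1 b = b then Finsupp.single (conjInv n s w) (1 : ℂ)
       else - Finsupp.single w (1 : ℂ)))

lemma conjInv_conjInv (n : ℕ) (π σ : Equiv.Perm (Fin n)) (w : SymInv n) :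
    conjInv n π (conjInv n σ w) = conjInv n (π * σ) w := by
  apply Subtype.ext; simp [conjInv, mul_assoc]

lemma conjInv_one (n : ℕ) (w : SymInv n) : conjInv n 1 w = w := by
  apply Subtype.ext; simp [conjInv]

lemma conjInv_apply (n : ℕ) (π : Equiv.Perm (Fin n)) (w : SymInv n) (x : Fin n) :
    (conjInv n π w).1 x = π (w.1 (π⁻¹ x)) := rfl

lemma conjInv_swap_left (n : ℕ) (x y : Fin n) (w : SymInv n) :
    (conjInv n (Equiv.swap x y) w).1 x = x ↔ w.1 y = y := by
  rw [conjInv_apply, Equiv.swap_inv, Equiv.swap_apply_left, Equiv.swap_apply_eq_iff,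
    Equiv.swap_apply_left]

lemma conjInv_swap_right (n : ℕ) (x y : Fin n) (w : SymInv n) :
    (conjInv n (Equiv.swap x y) w).1 y = y ↔ w.1 x = x := by
  rw [conjInv_apply, Equiv.swap_inv, Equiv.swap_apply_right, Equiv.swap_apply_eq_iff,
    Equiv.swap_apply_right]

lemma conjInv_swap_other (n : ℕ) (x y z : Fin n) (hx : z ≠ x) (hy : z ≠ y) (w : SymInv n) :
    (conjInv n (Equiv.swap x y) w).1 z = z ↔ w.1 z = z := by
  rw [conjInv_apply, Equiv.swap_inv, Equiv.swap_apply_of_ne_of_ne hx hy,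
    Equiv.swap_apply_eq_iff, Equiv.swap_apply_of_ne_of_ne hx hy]

lemma TOp_single (n : ℕ) (q : ℂ) (i : ℕ) (hi : i + 1 < n) (w : SymInv n) :
    TOp n q i hi (Finsupp.single w 1) =
    (if w.1 ⟨i, Nat.lt_of_succ_lt hi⟩ = ⟨i, Nat.lt_of_succ_lt hi⟩ then
      (if w.1 ⟨i + 1, hi⟩ = ⟨i + 1, hi⟩ then q • Finsupp.single w (1 : ℂ)
       else q • Finsupp.single (conjInv n (Equiv.swap ⟨i, Nat.lt_of_succ_lt hi⟩ ⟨i + 1, hi⟩) w) (1 : ℂ)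
            + (q - 1) • Finsupp.single w (1 : ℂ))
    else
      (if w.1 ⟨i + 1, hi⟩ = ⟨i + 1, hi⟩ then
        Finsupp.single (conjInv n (Equiv.swap ⟨i, Nat.lt_of_succ_lt hi⟩ ⟨i + 1, hi⟩) w) (1 : ℂ)
       else - Finsupp.single w (1 : ℂ))) := by
  simp only [TOp, Finsupp.lift_apply]
  rw [Finsupp.sum_single_index (by simp), one_smul]

/-- The braid relation `T_i T_{i+1} T_i = T_{i+1} T_i T_{i+1}`.  In the 0-based indexing
used here, the condition `1 ≤ i < n − 1` of the paper reads `i + 2 < n`. -/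
theorem TOp_braid (n : ℕ) (hn : 3 ≤ n) (q : ℂ) (hq : q ≠ 0) (i : ℕ) (hi : i + 2 < n) :
    (TOp n q i (by omega) : Module.End ℂ (Vn n)) * TOp n q (i + 1) hi * TOp n q i (by omega) =
      (TOp n q (i + 1) hi : Module.End ℂ (Vn n)) * TOp n q i (by omega) *
        TOp n q (i + 1) hi := by
  have hi1 : i + 1 < n := by omega
  set a : Fin n := ⟨i, by omega⟩ with ha
  set b : Fin n := ⟨i + 1, by omega⟩ with hb
  set c : Fin n := ⟨i + 2, by omega⟩ with hc
  have hab : a ≠ b := by simp [ha, hb, Fin.ext_iff]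
  have hbc : b ≠ c := by simp [hb, hc, Fin.ext_iff]
  have hac : a ≠ c := by simp [ha, hc, Fin.ext_iff]
  have key : ∀ w : SymInv n,
      (TOp n q i hi1) ((TOp n q (i+1) hi) ((TOp n q i hi1) (Finsupp.single w 1))) =
      (TOp n q (i+1) hi) ((TOp n q i hi1) ((TOp n q (i+1) hi) (Finsupp.single w 1))) := by
    intro w
    have hss : ∀ x : SymInv n, conjInv n (Equiv.swap a b) (conjInv n (Equiv.swap a b) x) = x := by
      intro x; rw [conjInv_conjInv, Equiv.swap_mul_self, conjInv_one]
    have htt : ∀ x : SymInv n, conjInv n (Equiv.swap b c) (conjInv n (Equiv.swap b c) x) = x := by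
      intro x; rw [conjInv_conjInv, Equiv.swap_mul_self, conjInv_one]
    have hbraid : ∀ x : SymInv n,
        conjInv n (Equiv.swap a b) (conjInv n (Equiv.swap b c) (conjInv n (Equiv.swap a b) x)) =
        conjInv n (Equiv.swap b c) (conjInv n (Equiv.swap a b) (conjInv n (Equiv.swap b c) x)) := by
      intro x
      rw [conjInv_conjInv, conjInv_conjInv, conjInv_conjInv, conjInv_conjInv]
      congr 1
      rw [mul_assoc, mul_assoc]
      ext z
      simp only [Equiv.Perm.mul_apply]
      rcases eq_or_ne z a with rfl|hza
      · simp [Equiv.swap_apply_of_ne_of_ne, hab, hbc, hac, hab.symm, hbc.symm, hac.symm]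
      rcases eq_or_ne z b with rfl|hzb
      · simp [Equiv.swap_apply_of_ne_of_ne, hab, hbc, hac, hab.symm, hbc.symm, hac.symm]
      rcases eq_or_ne z c with rfl|hzc
      · simp [Equiv.swap_apply_of_ne_of_ne, hab, hbc, hac, hab.symm, hbc.symm, hac.symm]
      · simp [Equiv.swap_apply_of_ne_of_ne, hza, hzb, hzc]
    have hc' : (⟨i + 1 + 1, hi⟩ : Fin n) = c := rfl
    by_cases hA : w.1 a = a <;> by_cases hB : w.1 b = b <;> by_cases hC : w.1 c = c <;>
      simp only [TOp_single, ← ha, ← hb, ← hc, hc', hA, hB, hC, if_true, if_false,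
        conjInv_swap_left, conjInv_swap_right,
        conjInv_swap_other n a b c hac.symm hbc.symm,
        conjInv_swap_other n b c a hab hac,
        map_add, map_smul, map_neg, smul_add, smul_smul, smul_neg, neg_neg, neg_add,
        hss, htt, hbraid] <;>
      module
  refine Finsupp.lhom_ext fun w r => ?_
  simp only [Module.End.mul_apply]
  have hr : (Finsupp.single w r : Vn n) = r • Finsupp.single w 1 := by simp
  rw [hr, map_smul, map_smul, map_smul, map_smul, map_smul, map_smul, key w]
end

section
/- For every n ≥ 2, every q ∈ ℂ with q ≠ 0, and all indices 1 ≤ i, j ≤ n − 1 with |i − j| > 1, the operators T_i and T_j on V (the span of basis vectors indexed by involutions in ISₙ) commute: T_i T_j = T_j T_i in End_ℂ(V). -/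
open Equiv

/-- The symmetric inverse semigroup `ISₙ`: partial injective maps of `{0, …, n−1}`
(modelled as partial equivalences `Fin n ≃. Fin n`), under composition of partial
maps: `(x * y)(a) = x(y(a))`. -/
abbrev ISn (n : ℕ) : Type := PEquiv (Fin n) (Fin n)

noncomputable instance ISnMonoid (n : ℕ) : Monoid (ISn n) where
  one := PEquiv.refl (Fin n)
  mul x y := y.trans x
  mul_assoc x y z := (PEquiv.trans_assoc z y x).symm
  one_mul x := PEquiv.trans_refl x
  mul_one x := PEquiv.refl_trans x

@[simp] theorem ISn.mul_def {n : ℕ} (x y : ISn n) : x * y = y.trans x := rfl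
@[simp] theorem ISn.one_def {n : ℕ} : (1 : ISn n) = PEquiv.refl (Fin n) := rfl

/-- Involutions in `ISₙ`: elements mapping their domain bijectively to itself with
`w(w(a)) = a` for all `a` in the domain; equivalently, `w.symm = w`. -/
abbrev ISInv (n : ℕ) : Type := {w : ISn n // w.symm = w}

/-- `V`: the complex vector space with basis `{I_w : w an involution in ISₙ}`. -/
abbrev VIS (n : ℕ) : Type := ISInv n →₀ ℂ

/-- Conjugation `x w x⁻¹` of an involution `w ∈ ISₙ` by an element `x ∈ ISₙ`
(as a partial map, `a ↦ x(w(x⁻¹(a)))`; when `dom(w) ⊆ dom(x)` this is the involution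
with domain `x(dom(w))` sending `x(a) ↦ x(w(a))` for `a ∈ dom(w)`). -/
def conjIS {n : ℕ} (x : ISn n) (w : ISInv n) : ISInv n :=
  ⟨(x.symm.trans w.1).trans x, by
    rw [PEquiv.symm_trans_rev, PEquiv.symm_trans_rev, PEquiv.symm_symm, w.2,
      PEquiv.trans_assoc]⟩

/-- Conjugation `π w π⁻¹` of an involution `w ∈ ISₙ` by a permutation `π ∈ Sₙ`:
the involution with domain `π(dom(w))` sending `π(a) ↦ π(w(a))` for `a ∈ dom(w)`. -/
def conjPermIS {n : ℕ} (π : Equiv.Perm (Fin n)) (w : ISInv n) : ISInv n :=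
  conjIS π.toPEquiv w

/-- The operator `T_i` on `V`.  Indices are 0-based: the parameter `i` (with
`i + 1 < n`) corresponds to the pair of points `i, i+1` of `{0, …, n−1}` (that is,
to the 1-based index `i+1` of the paper), and `s_i` is the transposition swapping
them.  On a basis vector `I_w`:
if `i, i+1 ∈ dom(w)` then `T_i I_w` is `q I_w` if `i, i+1 ∉ supp(w)`; `−I_w` if
`i, i+1 ∈ supp(w)`; `I_{s_i w s_i}` if `i ∈ supp(w)`, `i+1 ∉ supp(w)`;
`q I_{s_i w s_i} + (q−1) I_w` if `i ∉ supp(w)`, `i+1 ∈ supp(w)`.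
If `i, i+1 ∉ dom(w)` then `T_i I_w = q I_w`.  If `i ∈ dom(w)`, `i+1 ∉ dom(w)` then
`T_i I_w = I_{s_i w s_i}`.  If `i ∉ dom(w)`, `i+1 ∈ dom(w)` then
`T_i I_w = q I_{s_i w s_i} + (q−1) I_w`. -/
noncomputable def TIS (n : ℕ) (q : ℂ) (i : ℕ) (hi : i + 1 < n) : VIS n →ₗ[ℂ] VIS n :=
  Finsupp.lift (VIS n) ℂ (ISInv n) (fun w =>
    letI a : Fin n := ⟨i, Nat.lt_of_succ_lt hi⟩
    letI b : Fin n := ⟨i + 1, hi⟩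
    letI s : Equiv.Perm (Fin n) := Equiv.swap a b
    if (w.1 a).isSome then
      if (w.1 b).isSome then
        -- both `i` and `i+1` lie in `dom(w)`
        if w.1 a = some a then
          if w.1 b = some b then q • Finsupp.single w (1 : ℂ)
          else q • Finsupp.single (conjPermIS s w) (1 : ℂ) +
            (q - 1) • Finsupp.single w (1 : ℂ)
        else
          if w.1 b = some b then Finsupp.single (conjPermIS s w) (1 : ℂ)
          else - Finsupp.single w (1 : ℂ)
      else Finsupp.single (conjPermIS s w) (1 : ℂ)
    else
      if (w.1 b).isSome then
        q • Finsupp.single (conjPermIS s w) (1 : ℂ) + (q - 1) • Finsupp.single w (1 : ℂ)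
      else q • Finsupp.single w (1 : ℂ))

/-- The operator `P_i` on `V`.  Indices are 0-based: the parameter `i` (with `i < n`)
corresponds to the 1-based index `i+1` of the paper, so that the paper's condition
`dom(w) ⊆ {i+1, …, n}` becomes: every `a ∈ dom(w)` satisfies `i < a`.
On a basis vector: `P_i I_w = I_w` if `dom(w) ⊆ {i+1, …, n}`, and `P_i I_w = 0`
otherwise. -/
noncomputable def PIS (n : ℕ) (i : ℕ) : VIS n →ₗ[ℂ] VIS n :=
  Finsupp.lift (VIS n) ℂ (ISInv n) (fun w =>
    if ∀ a : Fin n, (w.1 a).isSome → i < (a : ℕ) then Finsupp.single w (1 : ℂ) else 0)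

/-- The linear map `C_π : V → V` with `C_π(I_w) = I_{π w π⁻¹}`. -/
noncomputable def CIS (n : ℕ) (π : Equiv.Perm (Fin n)) : VIS n →ₗ[ℂ] VIS n :=
  Finsupp.lift (VIS n) ℂ (ISInv n) (fun w => Finsupp.single (conjPermIS π w) (1 : ℂ))

lemma conjPermIS_apply {n : ℕ} (π : Equiv.Perm (Fin n)) (w : ISInv n) (x : Fin n) :
    (conjPermIS π w).1 x = (w.1 (π.symm x)).map π := by
  show (((π.toPEquiv.symm x).bind w.1).bind π.toPEquiv) = _
  rw [← Equiv.toPEquiv_symm, Equiv.toPEquiv_apply, Option.bind_some]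
  cases w.1 (π.symm x) <;> simp [Equiv.toPEquiv_apply]

lemma conjPermIS_comm {n : ℕ} (π σ : Equiv.Perm (Fin n))
    (h : ∀ x, π (σ x) = σ (π x)) (w : ISInv n) :
    conjPermIS π (conjPermIS σ w) = conjPermIS σ (conjPermIS π w) := by
  have hs : ∀ x, π.symm (σ.symm x) = σ.symm (π.symm x) := by
    intro x
    have := h (π.symm (σ.symm x))
    apply σ.injective; apply π.injective
    rw [this]
    simp
  apply Subtype.ext; apply PEquiv.ext; intro x
  simp only [conjPermIS_apply, hs, Option.map_map]
  congr 1
  ext y; simp only [Function.comp_apply]; exact congrArg Fin.val (h y)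

noncomputable def aT (q : ℂ) {n : ℕ} (a b : Fin n) (w : ISInv n) : ℂ :=
  if (w.1 a).isSome then
    if (w.1 b).isSome then
      if w.1 a = some a then (if w.1 b = some b then q else q - 1)
      else (if w.1 b = some b then 0 else -1)
    else 0
  else if (w.1 b).isSome then q - 1 else q

noncomputable def bT (q : ℂ) {n : ℕ} (a b : Fin n) (w : ISInv n) : ℂ :=
  if (w.1 a).isSome then
    if (w.1 b).isSome then
      if w.1 a = some a then (if w.1 b = some b then 0 else q)
      else (if w.1 b = some b then 1 else 0)
    else 1
  else if (w.1 b).isSome then q else 0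

lemma TIS_single (n : ℕ) (q : ℂ) (i : ℕ) (hi : i + 1 < n) (w : ISInv n) (c : ℂ) :
    TIS n q i hi (Finsupp.single w c) =
      letI a : Fin n := ⟨i, Nat.lt_of_succ_lt hi⟩
      letI b : Fin n := ⟨i + 1, hi⟩
      c • (aT q a b w • Finsupp.single w (1 : ℂ) +
        bT q a b w • Finsupp.single (conjPermIS (Equiv.swap a b) w) (1 : ℂ)) := by
  simp only [TIS, Finsupp.lift_apply, Finsupp.sum_single_index, zero_smul, aT, bT]
  split_ifs <;> simp <;> module

lemma conjPermIS_isSome {n : ℕ} (π : Equiv.Perm (Fin n)) (w : ISInv n) (x : Fin n)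
    (hx : π x = x) : ((conjPermIS π w).1 x).isSome = (w.1 x).isSome := by
  have hx' : π.symm x = x := π.injective (by rw [π.apply_symm_apply, hx])
  simp [conjPermIS_apply, hx']

lemma conjPermIS_fix {n : ℕ} (π : Equiv.Perm (Fin n)) (w : ISInv n) (x : Fin n)
    (hx : π x = x) : ((conjPermIS π w).1 x = some x) = (w.1 x = some x) := by
  have hx' : π.symm x = x := π.injective (by rw [π.apply_symm_apply, hx])
  simp only [conjPermIS_apply, hx', Option.map_eq_some_iff]
  apply propext
  constructor
  · rintro ⟨y, hy, rfl⟩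
    have hyy : π y = y := π.injective hx
    rw [hyy]; rwa [hyy] at hy
  · intro h; exact ⟨x, h, hx⟩

lemma aT_conj {n : ℕ} (q : ℂ) (a b : Fin n) (π : Equiv.Perm (Fin n)) (w : ISInv n)
    (ha : π a = a) (hb : π b = b) : aT q a b (conjPermIS π w) = aT q a b w := by
  simp only [aT, conjPermIS_isSome π w a ha, conjPermIS_isSome π w b hb,
    conjPermIS_fix π w a ha, conjPermIS_fix π w b hb]

lemma bT_conj {n : ℕ} (q : ℂ) (a b : Fin n) (π : Equiv.Perm (Fin n)) (w : ISInv n)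
    (ha : π a = a) (hb : π b = b) : bT q a b (conjPermIS π w) = bT q a b w := by
  simp only [bT, conjPermIS_isSome π w a ha, conjPermIS_isSome π w b hb,
    conjPermIS_fix π w a ha, conjPermIS_fix π w b hb]

lemma swap_apply_comm {α : Type*} [DecidableEq α] {a b c d : α}
    (hac : a ≠ c) (had : a ≠ d) (hbc : b ≠ c) (hbd : b ≠ d) (x : α) :
    Equiv.swap a b (Equiv.swap c d x) = Equiv.swap c d (Equiv.swap a b x) := by
  simp only [Equiv.swap_apply_def]
  split_ifs <;> simp_all

/-- Distant operators `T_i` and `T_j` on `V` commute (`|i − j| > 1`). -/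
theorem TIS_comm (n : ℕ) (hn : 2 ≤ n) (q : ℂ) (hq : q ≠ 0) (i j : ℕ)
    (hi : i + 1 < n) (hj : j + 1 < n) (hij : i + 1 < j ∨ j + 1 < i) :
    (TIS n q i hi : Module.End ℂ (VIS n)) * TIS n q j hj =
      (TIS n q j hj : Module.End ℂ (VIS n)) * TIS n q i hi := by
  have key : ∀ i j (hi : i + 1 < n) (hj : j + 1 < n), i + 1 < j →
      (TIS n q i hi : Module.End ℂ (VIS n)) * TIS n q j hj =
        (TIS n q j hj : Module.End ℂ (VIS n)) * TIS n q i hi := by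
    clear hij hi hj i j
    intro i j hi hj hlt
    set a : Fin n := ⟨i, Nat.lt_of_succ_lt hi⟩ with ha_def
    set b : Fin n := ⟨i + 1, hi⟩ with hb_def
    set c : Fin n := ⟨j, Nat.lt_of_succ_lt hj⟩ with hc_def
    set d : Fin n := ⟨j + 1, hj⟩ with hd_def
    have hac : a ≠ c := by simp [ha_def, hc_def, Fin.ext_iff]; omega
    have had : a ≠ d := by simp [ha_def, hd_def, Fin.ext_iff]; omega
    have hbc : b ≠ c := by simp [hb_def, hc_def, Fin.ext_iff]; omega
    have hbd : b ≠ d := by simp [hb_def, hd_def, Fin.ext_iff]; omega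
    have hfa : Equiv.swap c d a = a := Equiv.swap_apply_of_ne_of_ne hac had
    have hfb : Equiv.swap c d b = b := Equiv.swap_apply_of_ne_of_ne hbc hbd
    have hfc : Equiv.swap a b c = c := Equiv.swap_apply_of_ne_of_ne hac.symm hbc.symm
    have hfd : Equiv.swap a b d = d := Equiv.swap_apply_of_ne_of_ne had.symm hbd.symm
    apply Finsupp.lhom_ext
    intro w e
    simp only [Module.End.mul_apply, TIS_single, smul_add, map_add, map_smul]
    simp only [← ha_def, ← hb_def, ← hc_def, ← hd_def]
    simp only [TIS_single, aT_conj q a b (Equiv.swap c d) _ hfa hfb,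
      bT_conj q a b (Equiv.swap c d) _ hfa hfb,
      aT_conj q c d (Equiv.swap a b) _ hfc hfd,
      bT_conj q c d (Equiv.swap a b) _ hfc hfd,
      conjPermIS_comm (Equiv.swap a b) (Equiv.swap c d)
        (swap_apply_comm hac had hbc hbd) w]
    module
  rcases hij with h | h
  · exact key i j hi hj h
  · exact (key j i hj hi h).symm
end

section
/- For every n ≥ 2, every q ∈ ℂ with q ≠ 0, and every 1 ≤ i ≤ n − 1, the operators on V (the span of basis vectors indexed by involutions in ISₙ) satisfy P_{i+1} = P_i T_i P_i − (q − 1) P_i in End_ℂ(V). -/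
open Equiv

lemma lift_single {n : ℕ} (f : ISInv n → VIS n) (w : ISInv n) (r : ℂ) :
    Finsupp.lift (VIS n) ℂ (ISInv n) f (Finsupp.single w r) = r • f w := by
  rw [Finsupp.lift_apply, Finsupp.sum_single_index (by simp)]

lemma PIS_single {n : ℕ} (i : ℕ) (w : ISInv n) (r : ℂ) :
    PIS n i (Finsupp.single w r) =
      if ∀ a : Fin n, (w.1 a).isSome → i < (a : ℕ) then Finsupp.single w r else 0 := by
  rw [PIS, lift_single]
  split <;> simp [Finsupp.smul_single]

/-- `P_{i+1} = P_i T_i P_i − (q − 1) P_i` (0-based index `i` with `i + 1 < n`,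
corresponding to the paper's 1-based `1 ≤ i ≤ n − 1`). -/
theorem PIS_rec (n : ℕ) (hn : 2 ≤ n) (q : ℂ) (hq : q ≠ 0) (i : ℕ) (hi : i + 1 < n) :
    (PIS n (i + 1) : Module.End ℂ (VIS n)) =
      (PIS n i : Module.End ℂ (VIS n)) * TIS n q i hi * PIS n i - (q - 1) • PIS n i := by
  apply Finsupp.lhom_ext
  intro w r
  set a : Fin n := ⟨i, Nat.lt_of_succ_lt hi⟩ with ha
  set b : Fin n := ⟨i + 1, hi⟩ with hb
  set s : Equiv.Perm (Fin n) := Equiv.swap a b with hs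
  simp only [LinearMap.sub_apply, Module.End.mul_apply, LinearMap.smul_apply]
  by_cases hC : ∀ x : Fin n, (w.1 x).isSome → i < (x : ℕ)
  · -- i not in dom
    have hwa : ¬ (w.1 a).isSome := fun h => by simpa [ha] using hC a h
    have hP : PIS n i (Finsupp.single w r) = Finsupp.single w r := by
      rw [PIS_single, if_pos hC]
    rw [hP]
    by_cases hwb : (w.1 b).isSome
    · -- b in dom: both sides are suitable
      have hT : TIS n q i hi (Finsupp.single w r) =
          r • (q • Finsupp.single (conjPermIS s w) (1 : ℂ) +
            (q - 1) • Finsupp.single w (1 : ℂ)) := by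
        rw [TIS, lift_single]
        simp only [← ha, ← hb, ← hs, if_neg hwa, if_pos hwb]
      rw [hT]
      have hconj : ((conjPermIS s w).1 a).isSome := by
        have : (conjPermIS s w).1 a = (w.1 b).bind s.toPEquiv := by
          show ((s.toPEquiv.symm.trans w.1).trans s.toPEquiv) a = _
          show ((s.toPEquiv.symm a).bind w.1).bind _ = _
          rw [← Equiv.toPEquiv_symm, Equiv.toPEquiv_apply]
          simp [hs, Equiv.swap_apply_left]
        rw [this]
        obtain ⟨c, hc⟩ := Option.isSome_iff_exists.mp hwb
        simp [hc, Equiv.toPEquiv_apply]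
      have hPc : ¬ ∀ x : Fin n, ((conjPermIS s w).1 x).isSome → i < (x : ℕ) := by
        intro h
        exact absurd (h a hconj) (by simp [ha])
      have hP1 : PIS n i (Finsupp.single (conjPermIS s w) (1:ℂ)) = 0 := by
        rw [PIS_single, if_neg hPc]
      have hP2 : PIS n i (Finsupp.single w (1:ℂ)) = Finsupp.single w (1:ℂ) := by
        rw [PIS_single, if_pos hC]
      rw [map_smul, map_add, map_smul, map_smul, hP1, hP2]
      have hLHS : ¬ ∀ x : Fin n, (w.1 x).isSome → i + 1 < (x : ℕ) := by
        intro h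
        exact absurd (h b hwb) (by simp [hb])
      rw [PIS_single, if_neg hLHS]
      have hsr : Finsupp.single w r = r • Finsupp.single w (1:ℂ) := by
        simp [Finsupp.smul_single]
      rw [hsr]
      module
    · -- b not in dom
      have hT : TIS n q i hi (Finsupp.single w r) =
          r • (q • Finsupp.single w (1 : ℂ)) := by
        rw [TIS, lift_single]
        simp only [← ha, ← hb, ← hs, if_neg hwa, if_neg hwb]
      have hP2 : PIS n i (Finsupp.single w (1:ℂ)) = Finsupp.single w (1:ℂ) := by
        rw [PIS_single, if_pos hC]
      rw [hT, map_smul, map_smul, hP2]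
      have hLHS : ∀ x : Fin n, (w.1 x).isSome → i + 1 < (x : ℕ) := by
        intro x hx
        have h1 := hC x hx
        have h2 : (x : ℕ) ≠ i + 1 := by
          intro h
          apply hwb
          have : x = b := Fin.ext h
          rwa [← this]
        omega
      rw [PIS_single, if_pos hLHS]
      have hsr : Finsupp.single w r = r • Finsupp.single w (1:ℂ) := by
        simp [Finsupp.smul_single]
      rw [hsr]
      module
  · have hC' : ¬ ∀ x : Fin n, (w.1 x).isSome → i + 1 < (x : ℕ) := by
      intro h
      exact hC fun x hx => Nat.lt_of_succ_lt (h x hx)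
    rw [PIS_single, PIS_single, if_neg hC, if_neg hC']
    simp
end
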